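/- Let (w_k)_{k≥0} be a weight sequence with w_0 > 0 and w_k > 0 for some k ≥ 1, and set d := span(w) and ω := sup{k : w_k > 0}. Then: (i) if Z(m,n) > 0, then d divides m and 0 ≤ m ≤ ωn; (ii) if ω < ∞, there exists a constant C (depending on w) such that whenever d | m and C ≤ m ≤ ωn − C, one has Z(m,n) > 0; (iii) if ω = ∞, then for every C' < ∞ there exists a constant C (depending on w and C') such that whenever d | m and C ≤ m ≤ C'n, one has Z(m,n) > 0. -/

import Mathlib

open Filter Topology
open scoped ENNReal Classical

noncomputable def omegaW (w : ℕ → ℝ) : ℝ≥0∞ :=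
  sSup ((fun k : ℕ => (k : ℝ≥0∞)) '' {k : ℕ | 0 < w k})

noncomputable def spanW (w : ℕ → ℝ) : ℕ :=
  sSup {d : ℕ | ∀ k : ℕ, 1 ≤ k → 0 < w k → d ∣ k}

noncomputable def Zball (w : ℕ → ℝ) (m n : ℕ) : ℝ :=
  ∑ y ∈ Finset.Nat.antidiagonalTuple n m, ∏ i, w (y i)

private def ReprW (w : ℕ → ℝ) (m : ℕ) : Prop :=
  ∃ l : Multiset ℕ, (∀ s ∈ l, 1 ≤ s ∧ 0 < w s) ∧ l.sum = m

private lemma reprW_zero (w : ℕ → ℝ) : ReprW w 0 := ⟨0, by simp, rfl⟩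

private lemma reprW_single {w : ℕ → ℝ} {k : ℕ} (h1 : 1 ≤ k) (h2 : 0 < w k) :
    ReprW w k := ⟨{k}, by simp [h1, h2], by simp⟩

private lemma reprW_add {w : ℕ → ℝ} {a b : ℕ} (ha : ReprW w a) (hb : ReprW w b) :
    ReprW w (a + b) := by
  obtain ⟨l, hl, hls⟩ := ha
  obtain ⟨l', hl', hls'⟩ := hb
  refine ⟨l + l', ?_, by simp [hls, hls']⟩
  intro s hs
  rcases Multiset.mem_add.mp hs with h | h
  · exact hl s h
  · exact hl' s h

private lemma reprW_nsmul {w : ℕ → ℝ} {a : ℕ} (q : ℕ) (ha : ReprW w a) :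
    ReprW w (q * a) := by
  induction q with
  | zero => simpa using reprW_zero w
  | succ n ih =>
    have := reprW_add ih ha
    simpa [Nat.succ_mul] using this

private lemma reprW_dvd {w : ℕ → ℝ} {c a : ℕ}
    (hc : ∀ k, 1 ≤ k → 0 < w k → c ∣ k) (ha : ReprW w a) : c ∣ a := by
  obtain ⟨l, hl, hls⟩ := ha
  rw [← hls]
  exact Multiset.dvd_sum fun s hs => hc s (hl s hs).1 (hl s hs).2

private lemma card_le_sum {l : Multiset ℕ} (h : ∀ s ∈ l, 1 ≤ s) :
    Multiset.card l ≤ l.sum := by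
  induction l using Multiset.induction with
  | empty => simp
  | cons a t ih =>
    simp only [Multiset.card_cons, Multiset.sum_cons]
    have ha : 1 ≤ a := h a (Multiset.mem_cons_self a t)
    have := ih (fun s hs => h s (Multiset.mem_cons_of_mem hs))
    omega

private lemma span_spec (w : ℕ → ℝ) (h1 : ∃ k, 1 ≤ k ∧ 0 < w k) :
    0 < spanW w ∧ (∀ k, 1 ≤ k → 0 < w k → spanW w ∣ k) ∧
      ∃ a, ReprW w a ∧ ReprW w (a + spanW w) := by
  obtain ⟨k₀, hk₀1, hk₀w⟩ := h1
  set G : Set ℕ := {g | 0 < g ∧ ∃ a, ReprW w a ∧ ReprW w (a + g)} with hGdef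
  have hk₀G : k₀ ∈ G := ⟨hk₀1, 0, reprW_zero w, by simpa using reprW_single hk₀1 hk₀w⟩
  have hgG : sInf G ∈ G := Nat.sInf_mem ⟨k₀, hk₀G⟩
  set g := sInf G with hgdef
  obtain ⟨hg0, a, hra, hrag⟩ := hgG
  have hdvd : ∀ k, 1 ≤ k → 0 < w k → g ∣ k := by
    intro k hk1 hkw
    by_contra hnd
    have hr0 : 0 < k % g := Nat.pos_of_ne_zero fun h => hnd (Nat.dvd_of_mod_eq_zero h)
    have hrG : k % g ∈ G := by
      refine ⟨hr0, (k / g) * a + (k / g) * g, ?_, ?_⟩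
      · have he : (k / g) * a + (k / g) * g = (k / g) * (a + g) := by ring
        rw [he]
        exact reprW_nsmul _ hrag
      · have he : (k / g) * a + (k / g) * g + k % g = (k / g) * a + k := by
          have := Nat.div_add_mod k g
          have h2 : (k / g) * g = g * (k / g) := Nat.mul_comm _ _
          omega
        rw [he]
        exact reprW_add (reprW_nsmul _ hra) (reprW_single hk1 hkw)
    have hle := Nat.sInf_le hrG
    have hlt : k % g < g := Nat.mod_lt _ hg0
    omega
  have hub : ∀ c ∈ {d : ℕ | ∀ k, 1 ≤ k → 0 < w k → d ∣ k}, c ≤ g := by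
    intro c hc
    have hca : c ∣ a := reprW_dvd hc hra
    have hcag : c ∣ a + g := reprW_dvd hc hrag
    have hcg : c ∣ g := by
      have := Nat.dvd_sub hcag hca
      simpa using this
    exact Nat.le_of_dvd hg0 hcg
  have hspan : spanW w = g := by
    apply le_antisymm
    · exact csSup_le ⟨g, hdvd⟩ hub
    · exact le_csSup ⟨g, fun c hc => hub c hc⟩ hdvd
  rw [hspan]
  exact ⟨hg0, hdvd, a, hra, hrag⟩

private lemma reprW_large (w : ℕ → ℝ) (h1 : ∃ k, 1 ≤ k ∧ 0 < w k) :
    ∃ N, ∀ m, spanW w ∣ m → N ≤ m → ReprW w m := by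
  obtain ⟨hD0, hDdvd, a, hra, hraD⟩ := span_spec w h1
  set D := spanW w with hDdef
  rcases Nat.eq_zero_or_pos a with ha0 | hapos
  · refine ⟨0, fun m hm _ => ?_⟩
    obtain ⟨j, rfl⟩ := hm
    subst ha0
    have hD : ReprW w D := by simpa using hraD
    simpa [mul_comm] using reprW_nsmul j hD
  · have hDa : D ∣ a := reprW_dvd hDdvd hra
    obtain ⟨a', ha'⟩ := hDa
    have ha'pos : 0 < a' := by
      rcases Nat.eq_zero_or_pos a' with h | h
      · subst h; simp at ha'; omega
      · exact h
    refine ⟨2 * a * a, fun m hm hNm => ?_⟩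
    obtain ⟨j, rfl⟩ := hm
    set v := j % a' with hvdef
    set t := j / a' with htdef
    have hj : a' * t + v = j := Nat.div_add_mod j a'
    have hva' : v < a' := Nat.mod_lt _ ha'pos
    have hm_eq : D * j = t * a + v * D := by rw [← hj, ha']; ring
    -- v * D ≤ a
    have hvD : v * D ≤ a := by
      calc v * D ≤ a' * D := Nat.mul_le_mul_right D (le_of_lt hva')
        _ = a := by rw [ha', mul_comm]
    -- v ≤ a
    have ha'a : a' ≤ a := by
      calc a' ≤ D * a' := Nat.le_mul_of_pos_left a' hD0
        _ = a := ha'.symm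
    have hva : v ≤ a := le_trans (le_of_lt hva') ha'a
    -- t * a ≥ a * a
    have haa : a * a + v * D ≤ t * a + v * D := by
      have h2 : a ≤ a * a := Nat.le_mul_of_pos_left a hapos
      calc a * a + v * D ≤ a * a + a := by omega
        _ ≤ a * a + a * a := by omega
        _ = 2 * a * a := by ring
        _ ≤ D * j := hNm
        _ = t * a + v * D := hm_eq
    have htava : v * a ≤ t * a := by
      have h1 : a * a ≤ t * a := by omega
      calc v * a ≤ a * a := Nat.mul_le_mul_right a hva
        _ ≤ t * a := h1
    have htv : v ≤ t := Nat.le_of_mul_le_mul_right htava hapos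
    have key : D * j = (t - v) * a + v * (a + D) := by
      have h1 : (t - v) * a = t * a - v * a := Nat.sub_mul t v a
      have h2 : v * (a + D) = v * a + v * D := Nat.mul_add v a D
      rw [h1, h2, ← add_assoc, Nat.sub_add_cancel htava, hm_eq]
    rw [key]
    exact reprW_add (reprW_nsmul _ hra) (reprW_nsmul _ hraD)

private lemma Zball_pos_of_multiset (w : ℕ → ℝ) (hw : ∀ k, 0 ≤ w k) (h0 : 0 < w 0)
    {m n : ℕ} (h : ∃ l : Multiset ℕ, (∀ s ∈ l, 0 < w s) ∧ Multiset.card l ≤ n ∧ l.sum = m) :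
    0 < Zball w m n := by
  obtain ⟨l, hlpos, hlcard, hlsum⟩ := h
  set l' := l + Multiset.replicate (n - Multiset.card l) 0 with hl'def
  have hcard' : Multiset.card l' = n := by
    simp only [hl'def, Multiset.card_add, Multiset.card_replicate]
    omega
  have hsum' : l'.sum = m := by
    simp [hl'def, hlsum]
  have hpos' : ∀ s ∈ l', 0 < w s := by
    intro s hs
    rcases Multiset.mem_add.mp hs with h | h
    · exact hlpos s h
    · rw [Multiset.eq_of_mem_replicate h]; exact h0
  obtain ⟨L, hLlen, hLsum, hLpos⟩ :
      ∃ L : List ℕ, L.length = n ∧ L.sum = m ∧ ∀ s ∈ L, 0 < w s :=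
    ⟨l'.toList, by rw [Multiset.length_toList, hcard'],
      by rw [Multiset.sum_toList, hsum'],
      fun s hs => hpos' s (Multiset.mem_toList.mp hs)⟩
  clear_value l'
  subst hLlen
  have hy : L.get ∈ Finset.Nat.antidiagonalTuple L.length m := by
    rw [Finset.Nat.mem_antidiagonalTuple]
    rw [← Fin.sum_ofFn, List.ofFn_get, hLsum]
  have hterm : 0 < ∏ i, w (L.get i) :=
    Finset.prod_pos fun i _ => hLpos _ (L.get_mem i)
  unfold Zball
  refine Finset.sum_pos' (fun y _ => Finset.prod_nonneg fun i _ => hw _) ⟨L.get, hy, hterm⟩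


private lemma construct (w : ℕ → ℝ) (hw : ∀ k, 0 ≤ w k) (h0 : 0 < w 0) {N : ℕ}
    (hN : ∀ m, spanW w ∣ m → N ≤ m → ReprW w m)
    (hDdvd : ∀ k, 1 ≤ k → 0 < w k → spanW w ∣ k)
    {K : ℕ} (hK1 : 1 ≤ K) (hKw : 0 < w K) :
    ∀ m n : ℕ, spanW w ∣ m → N ≤ m → (m - N) / K + (N + K) ≤ n → 0 < Zball w m n := by
  intro m n hm hNm hn
  obtain ⟨s, hs⟩ : ∃ s, m = N + s := ⟨m - N, by omega⟩
  have hsmN : m - N = s := by omega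
  rw [hsmN] at hn
  set q := s / K with hqdef
  set r := s % K with hrdef
  have hqr : K * q + r = s := Nat.div_add_mod s K
  have hrK : r < K := Nat.mod_lt _ (by omega)
  set t := N + r with htdef
  have hm_eq : m = t + K * q := by rw [hs, ← hqr, htdef]; ring
  have hDt : spanW w ∣ t := by
    have hDK : spanW w ∣ K := hDdvd K hK1 hKw
    have hDKq : spanW w ∣ K * q := Dvd.dvd.mul_right hDK q
    have h2 : m - K * q = t := by rw [hm_eq, Nat.add_sub_cancel]
    rw [← h2]
    exact Nat.dvd_sub hm hDKq
  obtain ⟨l, hl, hlsum⟩ := hN t hDt (by omega)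
  have hlcard : Multiset.card l ≤ t := hlsum ▸ card_le_sum fun s hs => (hl s hs).1
  apply Zball_pos_of_multiset w hw h0
  refine ⟨l + Multiset.replicate q K, ?_, ?_, ?_⟩
  · intro x hx
    rcases Multiset.mem_add.mp hx with h | h
    · exact (hl x h).2
    · rw [Multiset.eq_of_mem_replicate h]; exact hKw
  · simp only [Multiset.card_add, Multiset.card_replicate]
    omega
  · simp only [Multiset.sum_add, Multiset.sum_replicate, smul_eq_mul, hlsum]
    rw [hm_eq]; ring

theorem balls_in_boxes_exists (w : ℕ → ℝ) (hw : ∀ k, 0 ≤ w k) (h0 : 0 < w 0)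
    (h1 : ∃ k, 1 ≤ k ∧ 0 < w k) :
    (∀ m n : ℕ, 0 < Zball w m n → spanW w ∣ m ∧ (m : ℝ≥0∞) ≤ omegaW w * n) ∧
    (omegaW w ≠ ⊤ → ∃ C : ℕ, ∀ m n : ℕ, spanW w ∣ m →
      C ≤ m → (m : ℝ≥0∞) + C ≤ omegaW w * n → 0 < Zball w m n) ∧
    (omegaW w = ⊤ → ∀ C' : ℝ, ∃ C : ℕ, ∀ m n : ℕ, spanW w ∣ m →
      C ≤ m → (m : ℝ) ≤ C' * n → 0 < Zball w m n) := by
  obtain ⟨hD0, hDdvd, _⟩ := span_spec w h1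
  obtain ⟨N, hN⟩ := reprW_large w h1
  refine ⟨?_, ?_, ?_⟩
  · -- part (i)
    intro m n hZ
    have hex : ∃ y ∈ Finset.Nat.antidiagonalTuple n m, 0 < ∏ i, w (y i) := by
      by_contra hcon
      push_neg at hcon
      have hz : Zball w m n = 0 :=
        Finset.sum_eq_zero fun y hy =>
          le_antisymm (hcon y hy) (Finset.prod_nonneg fun i _ => hw _)
      rw [hz] at hZ; exact lt_irrefl _ hZ
    obtain ⟨y, hy, hypos⟩ := hex
    have hysum : ∑ i, y i = m := Finset.Nat.mem_antidiagonalTuple.mp hy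
    have hyw : ∀ i, 0 < w (y i) := by
      intro i
      rcases lt_or_eq_of_le (hw (y i)) with h | h
      · exact h
      · exfalso
        have hz : ∏ i, w (y i) = 0 := Finset.prod_eq_zero (Finset.mem_univ i) h.symm
        rw [hz] at hypos; exact lt_irrefl _ hypos
    constructor
    · rw [← hysum]
      refine Finset.dvd_sum fun i _ => ?_
      rcases Nat.eq_zero_or_pos (y i) with h | h
      · simp [h]
      · exact hDdvd _ h (hyw i)
    · rw [← hysum]
      push_cast
      calc (∑ i, (y i : ℝ≥0∞)) ≤ ∑ _i : Fin n, omegaW w :=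
            Finset.sum_le_sum fun i _ => le_sSup ⟨y i, hyw i, rfl⟩
        _ = n * omegaW w := by
            rw [Finset.sum_const, Finset.card_univ, Fintype.card_fin, nsmul_eq_mul]
        _ = omegaW w * n := mul_comm _ _
  · -- part (ii)
    intro hfin
    obtain ⟨B, hB⟩ := ENNReal.exists_nat_gt hfin
    have hbdd : ∀ k, 0 < w k → k ≤ B := by
      intro k hk
      have h1' : (k : ℝ≥0∞) ≤ omegaW w := le_sSup ⟨k, hk, rfl⟩
      have h2' : (k : ℝ≥0∞) < (B : ℝ≥0∞) := lt_of_le_of_lt h1' hB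
      exact_mod_cast le_of_lt h2'
    have hbddA : BddAbove {k : ℕ | 0 < w k} := ⟨B, fun k hk => hbdd k hk⟩
    set Ω := sSup {k : ℕ | 0 < w k} with hΩdef
    have hΩmem : 0 < w Ω := Nat.sSup_mem ⟨0, h0⟩ hbddA
    obtain ⟨k₀, hk₀1, hk₀w⟩ := h1
    have hΩ1 : 1 ≤ Ω := le_trans hk₀1 (le_csSup hbddA hk₀w)
    have hcast : omegaW w = (Ω : ℝ≥0∞) := by
      apply le_antisymm
      · apply sSup_le
        rintro x ⟨k, hk, rfl⟩
        exact Nat.cast_le.mpr (le_csSup hbddA hk)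
      · exact le_sSup ⟨Ω, hΩmem, rfl⟩
    refine ⟨Ω * (N + Ω), fun m n hm hCm hcond => ?_⟩
    rw [hcast] at hcond
    have hnat : m + Ω * (N + Ω) ≤ Ω * n := by
      exact_mod_cast hcond
    have hNm : N ≤ m := by
      have : N + Ω ≤ Ω * (N + Ω) := Nat.le_mul_of_pos_left (N + Ω) (by omega)
      omega
    apply construct w hw h0 hN hDdvd hΩ1 hΩmem m n hm hNm
    -- (m - N) / Ω + (N + Ω) ≤ n
    have hq : (m - N) / Ω * Ω ≤ m - N := Nat.div_mul_le_self _ _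
    have hkey : Ω * ((m - N) / Ω + (N + Ω)) ≤ Ω * n := by
      have h1' : Ω * ((m - N) / Ω) ≤ m - N := by rw [mul_comm]; exact hq
      have h2' : Ω * ((m - N) / Ω + (N + Ω)) = Ω * ((m - N) / Ω) + Ω * (N + Ω) :=
        Nat.mul_add _ _ _
      omega
    exact Nat.le_of_mul_le_mul_left hkey (by omega)
  · -- part (iii)
    intro hinf C'
    set C'' := max C' 1 with hC''def
    have hC''1 : (1 : ℝ) ≤ C'' := le_max_right _ _
    have hC''pos : (0 : ℝ) < C'' := lt_of_lt_of_le one_pos hC''1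
    -- find a large support element
    obtain ⟨K, hKw, hKbig⟩ : ∃ K : ℕ, 0 < w K ∧ 2 * C'' ≤ (K : ℝ) := by
      by_contra hcon
      push_neg at hcon
      have hle : omegaW w ≤ ((⌈2 * C''⌉₊ : ℕ) : ℝ≥0∞) := by
        apply sSup_le
        rintro x ⟨k, hk, rfl⟩
        have : (k : ℝ) < 2 * C'' := hcon k hk
        have hk' : k ≤ ⌈2 * C''⌉₊ := by
          have h2 : (k : ℝ) ≤ (⌈2 * C''⌉₊ : ℝ) := le_trans (le_of_lt this) (Nat.le_ceil _)
          exact_mod_cast h2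
        exact Nat.cast_le.mpr hk'
      rw [hinf] at hle
      exact ENNReal.natCast_ne_top _ (top_le_iff.mp hle)
    have hK1 : 1 ≤ K := by
      by_contra hcon
      have : K = 0 := by omega
      rw [this] at hKbig
      simp at hKbig
      linarith
    refine ⟨N + ⌈C'' * (2 * (N + K))⌉₊, fun m n hm hCm hmn => ?_⟩
    have hNm : N ≤ m := by omega
    have hmn'' : (m : ℝ) ≤ C'' * n :=
      le_trans hmn (mul_le_mul_of_nonneg_right (le_max_left _ _) (Nat.cast_nonneg n))
    -- 2 * (N + K) ≤ n
    have hNKn : 2 * (N + K) ≤ n := by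
      have h1' : (C'' * (2 * (N + K)) : ℝ) ≤ C'' * n := by
        calc (C'' * (2 * (N + K)) : ℝ) ≤ (⌈C'' * (2 * (N + K))⌉₊ : ℝ) := Nat.le_ceil _
          _ ≤ ((N + ⌈C'' * (2 * (N + K))⌉₊ : ℕ) : ℝ) := by push_cast; linarith [(Nat.cast_nonneg N : (0:ℝ) ≤ N)]
          _ ≤ (m : ℝ) := by exact_mod_cast hCm
          _ ≤ C'' * n := hmn''
      have h2' : ((2 * (N + K) : ℕ) : ℝ) ≤ (n : ℝ) := by
        push_cast
        nlinarith
      exact_mod_cast h2'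
    -- 2 * q ≤ n
    set q := (m - N) / K with hqdef
    have hq : q * K ≤ m := le_trans (Nat.div_mul_le_self _ _) (Nat.sub_le _ _)
    have h2q : 2 * q ≤ n := by
      have h1' : ((q * K : ℕ) : ℝ) ≤ (m : ℝ) := by exact_mod_cast hq
      have h2' : (2 : ℝ) * (q * K) ≤ (K : ℝ) * n := by
        push_cast at h1' ⊢
        nlinarith
      have h3' : ((2 * q : ℕ) : ℝ) ≤ (n : ℝ) := by
        push_cast
        have hKpos : (0 : ℝ) < K := by exact_mod_cast hK1
        nlinarith
      exact_mod_cast h3'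
    apply construct w hw h0 hN hDdvd hK1 hKw m n hm hNm
    omega
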